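/- The minimal DFA of the language L(A_m) (the NFA from the exponential lower-bound construction) has exactly 2^{m+1} states: in the subset construction from the initial set {0,1,…,m}, every subset of {0,…,m} is reachable and any two distinct subsets are distinguishable. -/

import Mathlib

/-- The alphabet `Σ_m = {b, a_1, …, a_m}` is encoded in `ℕ`: the letter `b` is `0`
and the letter `a_i` is `i` (for `1 ≤ i ≤ m`).  The NFA `A_m` has states
`{0,1,…,m}` (all initial, `0` accepting), `b`-self-loops on states `1,…,m`,
`a_j`-self-loops on states `i > j`, and `a_i`-transitions from `i` to all `j < i`. -/
def expNFA (m : ℕ) : NFA ℕ (Fin (m + 1)) where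
  step i c :=
    {j | (c = 0 ∧ 1 ≤ (i : ℕ) ∧ j = i) ∨
      (1 ≤ c ∧ c < (i : ℕ) ∧ j = i) ∨
      (c = (i : ℕ) ∧ 1 ≤ (i : ℕ) ∧ (j : ℕ) < (i : ℕ))}
  start := Set.univ
  accept := {i | (i : ℕ) = 0}

/-- The set of left quotients of a language; its cardinality is the number of
states of the minimal DFA of the language. -/
def leftQuotients {α : Type*} (K : Set (List α)) : Set (Set (List α)) :=
  {S | ∃ x : List α, S = {y | x ++ y ∈ K}}

-- letter b removes 0
lemma stepSet_b (m : ℕ) (S : Set (Fin (m+1))) :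
    (expNFA m).stepSet S 0 = S \ {j | (j : ℕ) = 0} := by
  ext j
  simp only [NFA.stepSet, Set.mem_iUnion, expNFA, Set.mem_setOf_eq, Set.mem_diff]
  constructor
  · rintro ⟨s, hs, h⟩
    rcases h with ⟨_, h1, rfl⟩ | ⟨h, _⟩ | ⟨h, h1, _⟩
    · exact ⟨hs, by omega⟩
    · omega
    · omega
  · rintro ⟨hj, h0⟩
    exact ⟨j, hj, Or.inl ⟨by trivial, by omega, rfl⟩⟩

-- letter a_i from a set containing all j ≤ i removes i
lemma stepSet_a (m : ℕ) (i : Fin (m+1)) (hi : 1 ≤ (i : ℕ)) (S : Set (Fin (m+1)))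
    (hS : ∀ j : Fin (m+1), (j : ℕ) ≤ (i : ℕ) → j ∈ S) :
    (expNFA m).stepSet S (i : ℕ) = S \ {i} := by
  ext j
  simp only [NFA.stepSet, Set.mem_iUnion, expNFA, Set.mem_setOf_eq, Set.mem_diff,
    Set.mem_singleton_iff]
  constructor
  · rintro ⟨s, hs, h⟩
    rcases h with ⟨h0, _, rfl⟩ | ⟨_, hlt, rfl⟩ | ⟨heq, h1, hlt⟩
    · omega
    · exact ⟨hs, fun h => by subst h; omega⟩
    · refine ⟨hS j (by omega), fun h => by subst h; omega⟩
  · rintro ⟨hj, hne⟩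
    rcases lt_trichotomy (j : ℕ) (i : ℕ) with h | h | h
    · exact ⟨i, hS i le_rfl, Or.inr (Or.inr ⟨rfl, hi, h⟩)⟩
    · exact absurd (Fin.ext h) hne
    · exact ⟨j, hj, Or.inr (Or.inl ⟨hi, h, rfl⟩)⟩

lemma accept_iff (m : ℕ) (S : Set (Fin (m+1))) :
    S ∈ (expNFA m).toDFA.accept ↔ (0 : Fin (m+1)) ∈ S := by
  constructor
  · rintro ⟨s, hs, h⟩
    have : s = 0 := Fin.ext (by simpa [expNFA] using h)
    exact this ▸ hs
  · intro h; exact ⟨0, h, by simp [expNFA, NFA.toDFA]⟩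

-- 0 ∈ stepSet S a_i iff i ∈ S
lemma zero_mem_stepSet (m : ℕ) (i : Fin (m+1)) (hi : 1 ≤ (i : ℕ)) (S : Set (Fin (m+1))) :
    (0 : Fin (m+1)) ∈ (expNFA m).stepSet S (i : ℕ) ↔ i ∈ S := by
  simp only [NFA.stepSet, Set.mem_iUnion, expNFA, Set.mem_setOf_eq]
  constructor
  · rintro ⟨s, hs, h⟩
    rcases h with ⟨h0, _, heq⟩ | ⟨_, hlt, heq⟩ | ⟨heq, h1, _⟩
    · omega
    · have : (s : ℕ) = 0 := by rw [← heq]; simp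
      omega
    · have : s = i := Fin.ext heq.symm
      exact this ▸ hs
  · intro h
    exact ⟨i, h, Or.inr (Or.inr ⟨rfl, hi, lt_of_lt_of_le (by simp) hi⟩)⟩

lemma evalFrom_cons (m : ℕ) (S : Set (Fin (m+1))) (c : ℕ) (x : List ℕ) :
    (expNFA m).toDFA.evalFrom S (c :: x) =
      (expNFA m).toDFA.evalFrom ((expNFA m).stepSet S c) x := rfl

lemma reach (m : ℕ) : ∀ k (W Z : Set (Fin (m+1))), Z ⊆ W →
    (∀ a : Fin (m+1), a ∉ W → ∀ b ∈ W \ Z, b < a) → (W \ Z).ncard ≤ k →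
    ∃ x : List ℕ, (expNFA m).toDFA.evalFrom W x = Z := by
  intro k
  induction k with
  | zero =>
    intro W Z hZW _ hcard
    have h : W \ Z = ∅ := by
      rw [← Set.ncard_eq_zero (Set.toFinite _)]; omega
    have : W = Z := Set.Subset.antisymm (Set.diff_eq_empty.mp h) hZW
    exact ⟨[], by simp [this, DFA.evalFrom]⟩
  | succ k ih =>
    intro W Z hZW hinv hcard
    by_cases hempty : W \ Z = ∅
    · have : W = Z := Set.Subset.antisymm (Set.diff_eq_empty.mp hempty) hZW
      exact ⟨[], by simp [this, DFA.evalFrom]⟩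
    · have hfin : (W \ Z).Finite := Set.toFinite _
      have hne : hfin.toFinset.Nonempty := by
        rw [Set.Finite.toFinset_nonempty]; exact Set.nonempty_iff_ne_empty.mpr hempty
      set i := hfin.toFinset.max' hne with hidef
      have hiWZ : i ∈ W \ Z := by
        have := hfin.toFinset.max'_mem hne
        rwa [Set.Finite.mem_toFinset] at this
      have hmax : ∀ b ∈ W \ Z, b ≤ i := fun b hb =>
        hfin.toFinset.le_max' b (by rwa [Set.Finite.mem_toFinset])
      rcases Nat.eq_zero_or_pos (i : ℕ) with hi0 | hi1
      · -- W \ Z = {i} with i = 0; use letter b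
        have hWZ : W \ Z = {i} := by
          apply Set.Subset.antisymm
          · intro b hb
            have := hmax b hb
            have : (b : ℕ) ≤ (i : ℕ) := this
            exact Set.mem_singleton_iff.mpr (Fin.ext (by omega))
          · simpa using hiWZ
        have hstep : (expNFA m).stepSet W 0 = Z := by
          rw [stepSet_b]
          have h1 : {j : Fin (m+1) | (j : ℕ) = 0} = {i} := by
            ext j; simp only [Set.mem_setOf_eq, Set.mem_singleton_iff, Fin.ext_iff, hi0]
          rw [h1]
          ext j
          constructor
          · rintro ⟨hjW, hji⟩
            by_contra hjZ
            exact hji (hWZ ▸ (⟨hjW, hjZ⟩ : j ∈ W \ Z))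
          · intro hj
            exact ⟨hZW hj, fun h => hiWZ.2 (h ▸ hj)⟩
        exact ⟨[0], by rw [evalFrom_cons, hstep, DFA.evalFrom]; rfl⟩
      · -- use letter a_i
        have hall : ∀ j : Fin (m+1), (j : ℕ) ≤ (i : ℕ) → j ∈ W := by
          intro j hj
          by_contra hjW
          have hlt : i < j := hinv j hjW i hiWZ
          have : (i : ℕ) < (j : ℕ) := hlt
          omega
        have hstep := stepSet_a m i hi1 W hall
        have hZW' : Z ⊆ W \ {i} := fun z hz =>
          ⟨hZW hz, fun h => hiWZ.2 (h ▸ hz)⟩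
        have hinv' : ∀ a : Fin (m+1), a ∉ W \ {i} → ∀ b ∈ (W \ {i}) \ Z, b < a := by
          intro a ha b hb
          have hbWZ : b ∈ W \ Z := ⟨hb.1.1, hb.2⟩
          rcases Classical.em (a ∈ W) with haW | haW
          · have heq : a = i := by
              by_contra h
              exact ha ⟨haW, h⟩
            rw [heq]
            exact lt_of_le_of_ne (hmax b hbWZ) hb.1.2
          · exact hinv a haW b hbWZ
        have hcard' : ((W \ {i}) \ Z).ncard ≤ k := by
          have h1 : (W \ {i}) \ Z = (W \ Z) \ {i} := by
            ext j; constructor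
            · rintro ⟨⟨h1, h2⟩, h3⟩; exact ⟨⟨h1, h3⟩, h2⟩
            · rintro ⟨⟨h1, h3⟩, h2⟩; exact ⟨⟨h1, h2⟩, h3⟩
          rw [h1]
          have := Set.ncard_diff_singleton_lt_of_mem hiWZ (Set.toFinite _)
          omega
        obtain ⟨x, hx⟩ := ih (W \ {i}) Z hZW' hinv' hcard'
        exact ⟨(i : ℕ) :: x, by rw [evalFrom_cons, hstep, hx]⟩

lemma dist_helper (m : ℕ) (Z Z' : Set (Fin (m+1))) (i : Fin (m+1))
    (hiZ : i ∈ Z) (hiZ' : i ∉ Z') :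
    ∃ y : List ℕ, (expNFA m).toDFA.evalFrom Z y ∈ (expNFA m).toDFA.accept ∧
      (expNFA m).toDFA.evalFrom Z' y ∉ (expNFA m).toDFA.accept := by
  rcases Nat.eq_zero_or_pos (i : ℕ) with hi0 | hi1
  · have hi : i = 0 := Fin.ext hi0
    subst hi
    refine ⟨[], ?_, ?_⟩
    · exact (accept_iff m Z).mpr hiZ
    · intro h
      exact hiZ' ((accept_iff m Z').mp h)
  · refine ⟨[(i : ℕ)], ?_, ?_⟩
    · have : (expNFA m).toDFA.evalFrom Z [(i : ℕ)] = (expNFA m).stepSet Z (i : ℕ) := rfl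
      rw [this, accept_iff]
      exact (zero_mem_stepSet m i hi1 Z).mpr hiZ
    · have : (expNFA m).toDFA.evalFrom Z' [(i : ℕ)] = (expNFA m).stepSet Z' (i : ℕ) := rfl
      rw [this, accept_iff, zero_mem_stepSet m i hi1 Z']
      exact hiZ'

theorem minimal_dfa_exp_states (m : ℕ) :
    let D : DFA ℕ (Set (Fin (m + 1))) := (expNFA m).toDFA
    (∀ Z : Set (Fin (m + 1)), ∃ x : List ℕ, D.eval x = Z) ∧
    (∀ Z Z' : Set (Fin (m + 1)), Z ≠ Z' →
      ∃ y : List ℕ,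
        ¬ (D.evalFrom Z y ∈ D.accept ↔ D.evalFrom Z' y ∈ D.accept)) ∧
    (leftQuotients ((expNFA m).accepts : Set (List ℕ))).ncard = 2 ^ (m + 1) := by
  intro D
  have hreach : ∀ Z : Set (Fin (m + 1)), ∃ x : List ℕ, D.eval x = Z := by
    intro Z
    obtain ⟨x, hx⟩ := reach m ((Set.univ \ Z).ncard) Set.univ Z (Set.subset_univ Z)
      (fun a ha => absurd (Set.mem_univ a) ha) le_rfl
    exact ⟨x, hx⟩
  have hdist : ∀ Z Z' : Set (Fin (m + 1)), Z ≠ Z' →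
      ∃ y : List ℕ, ¬ (D.evalFrom Z y ∈ D.accept ↔ D.evalFrom Z' y ∈ D.accept) := by
    intro Z Z' hne
    have : ∃ i, (i ∈ Z ∧ i ∉ Z') ∨ (i ∈ Z' ∧ i ∉ Z) := by
      by_contra h
      push_neg at h
      exact hne (Set.ext fun i => ⟨fun hi => (h i).1 hi, fun hi => (h i).2 hi⟩)
    obtain ⟨i, hi | hi⟩ := this
    · obtain ⟨y, h1, h2⟩ := dist_helper m Z Z' i hi.1 hi.2
      exact ⟨y, fun h => h2 (h.mp h1)⟩
    · obtain ⟨y, h1, h2⟩ := dist_helper m Z' Z i hi.1 hi.2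
      exact ⟨y, fun h => h2 (h.mpr h1)⟩
  refine ⟨hreach, hdist, ?_⟩
  set f : Set (Fin (m + 1)) → Set (List ℕ) :=
    fun Z => {y | D.evalFrom Z y ∈ D.accept} with hf
  have hinj : Function.Injective f := by
    intro Z Z' h
    by_contra hne
    obtain ⟨y, hy⟩ := hdist Z Z' hne
    apply hy
    constructor
    · intro h1
      have : y ∈ f Z := h1
      rw [h] at this; exact this
    · intro h1
      have : y ∈ f Z' := h1
      rw [← h] at this; exact this
  have hquot : ∀ x : List ℕ, {y : List ℕ | x ++ y ∈ (expNFA m).accepts} = f (D.eval x) := by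
    intro x
    ext y
    have h1 : x ++ y ∈ (expNFA m).accepts ↔ x ++ y ∈ D.accepts := by
      rw [NFA.toDFA_correct]
    simp only [Set.mem_setOf_eq, hf]
    rw [h1, DFA.mem_accepts]
    show D.eval (x ++ y) ∈ D.accept ↔ D.evalFrom (D.eval x) y ∈ D.accept
    rw [DFA.eval, DFA.evalFrom_of_append]
  have hrange : leftQuotients ((expNFA m).accepts : Set (List ℕ)) = Set.range f := by
    ext S
    constructor
    · rintro ⟨x, rfl⟩
      exact ⟨D.eval x, (hquot x).symm⟩
    · rintro ⟨Z, rfl⟩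
      obtain ⟨x, hx⟩ := hreach Z
      exact ⟨x, by rw [← hx]; exact (hquot x).symm⟩
  rw [hrange, ← Set.image_univ, Set.ncard_image_of_injective _ hinj, Set.ncard_univ,
    Nat.card_eq_fintype_card, Fintype.card_set, Fintype.card_fin]
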